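/- arXiv:1105.4317 — 4 statements merged into one kernel-verified Lean document; each statement's English description precedes it below -/
import Mathlib

section
/- For all complex numbers x, y, a and every natural number n, (x+y)^n = \sum_{k=0}^n \binom{n}{k} x(x+ka)^{k-1} (y-ka)^{n-k}, where for k=0 the term x(x+ka)^{k-1} is interpreted as 1. -/
noncomputable def abelPoly (x a : ℂ) (k : ℕ) : ℂ :=
  if k = 0 then 1 else x * (x + k * a) ^ (k - 1)

open Finset

noncomputable def Asum (a : ℂ) (n : ℕ) (x y : ℂ) : ℂ :=
  ∑ k ∈ range (n+1), (n.choose k : ℂ) * abelPoly x a k * (y - k*a)^(n-k)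

noncomputable def Bsum (a : ℂ) (n : ℕ) (x y : ℂ) : ℂ :=
  ∑ k ∈ range (n+1), (n.choose k : ℂ) * (x + k*a)^k * (y - k*a)^(n-k)

lemma abelPoly_succ (x a : ℂ) (j : ℕ) :
    abelPoly x a (j+1) = x * (x + ((j+1 : ℕ) : ℂ)*a)^j := by
  simp [abelPoly]

lemma Bdec (a x y : ℂ) (n : ℕ) :
    Bsum a (n+1) x y = Asum a (n+1) x y + a*(n+1) * Bsum a n (x+a) (y-a) := by
  unfold Asum Bsum
  rw [Finset.sum_range_succ' (fun k => (((n+1).choose k : ℕ) : ℂ) * (x + k*a)^k * (y - k*a)^(n+1-k)) (n+1),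
      Finset.sum_range_succ' (fun k => (((n+1).choose k : ℕ) : ℂ) * abelPoly x a k * (y - k*a)^(n+1-k)) (n+1),
      Finset.mul_sum]
  have h : ∀ j ∈ range (n+1),
      (((n+1).choose (j+1) : ℕ) : ℂ) * (x + ((j+1 : ℕ) : ℂ)*a)^(j+1) * (y - ((j+1 : ℕ) : ℂ)*a)^(n+1-(j+1))
      = (((n+1).choose (j+1) : ℕ) : ℂ) * abelPoly x a (j+1) * (y - ((j+1 : ℕ) : ℂ)*a)^(n+1-(j+1))
        + a*((n : ℂ)+1) * (((n.choose j : ℕ) : ℂ) * ((x+a) + j*a)^j * ((y-a) - j*a)^(n-j)) := by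
    intro j hj
    have hsub : n + 1 - (j+1) = n - j := by omega
    have hc : ((n+1 : ℕ) : ℂ) * (n.choose j : ℕ) = (((n+1).choose (j+1) : ℕ) : ℂ) * ((j+1 : ℕ) : ℂ) := by
      exact_mod_cast congrArg (Nat.cast : ℕ → ℂ) (Nat.add_one_mul_choose_eq n j)
    rw [hsub, abelPoly_succ]
    push_cast at hc ⊢
    linear_combination (-(a * (x + ((j:ℂ)+1)*a)^j * (y - ((j:ℂ)+1)*a)^(n-j))) * hc
  rw [Finset.sum_congr rfl h, Finset.sum_add_distrib]
  simp [abelPoly]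
  ring

lemma Arec (a x y : ℂ) (m : ℕ) :
    Asum a (m+2) x y
      = y * Asum a (m+1) x y + x * Bsum a (m+1) (x+a) (y-a)
        - a*((m:ℂ)+1)*x * Bsum a m (x+a) (y-a) := by
  -- the weighted sum W
  have hW : (∑ k ∈ range (m+2), (k:ℂ) * (((m+1).choose k : ℕ):ℂ) * abelPoly x a k * (y - k*a)^(m+1-k))
      = ((m:ℂ)+1) * x * Bsum a m (x+a) (y-a) := by
    rw [Finset.sum_range_succ' (fun k => (k:ℂ) * (((m+1).choose k : ℕ):ℂ) * abelPoly x a k * (y - k*a)^(m+1-k)) (m+1)]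
    unfold Bsum
    rw [Finset.mul_sum]
    have h : ∀ j ∈ range (m+1),
        (((j+1:ℕ)):ℂ) * (((m+1).choose (j+1) : ℕ):ℂ) * abelPoly x a (j+1) * (y - ((j+1:ℕ):ℂ)*a)^(m+1-(j+1))
        = ((m:ℂ)+1) * x * ((( m.choose j : ℕ):ℂ) * ((x+a) + j*a)^j * ((y-a) - j*a)^(m-j)) := by
      intro j hj
      have hsub : m + 1 - (j+1) = m - j := by omega
      have hc : ((m+1 : ℕ) : ℂ) * (m.choose j : ℕ) = (((m+1).choose (j+1) : ℕ) : ℂ) * ((j+1 : ℕ) : ℂ) := by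
        exact_mod_cast congrArg (Nat.cast : ℕ → ℂ) (Nat.add_one_mul_choose_eq m j)
      rw [hsub, abelPoly_succ]
      push_cast at hc ⊢
      linear_combination (-(x * (x + ((j:ℂ)+1)*a)^j * (y - ((j:ℂ)+1)*a)^(m-j))) * hc
    rw [Finset.sum_congr rfl h]
    simp
  have hstart : Asum a (m+2) x y
      = (∑ j ∈ range (m+2), (((m+2).choose (j+1) : ℕ):ℂ) * abelPoly x a (j+1) * (y-((j+1:ℕ):ℂ)*a)^(m+2-(j+1)))
        + (((m+2).choose 0 : ℕ):ℂ) * abelPoly x a 0 * (y-((0:ℕ):ℂ)*a)^(m+2-0) := by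
    unfold Asum
    exact Finset.sum_range_succ' (fun k => (((m+2).choose k : ℕ):ℂ) * abelPoly x a k * (y-(k:ℂ)*a)^(m+2-k)) (m+2)
  rw [hstart]
  have hsplit : ∀ j ∈ range (m+2),
      (((m+2).choose (j+1) : ℕ):ℂ) * abelPoly x a (j+1) * (y-((j+1:ℕ):ℂ)*a)^(m+2-(j+1))
      = (((m+1).choose (j+1) : ℕ):ℂ) * abelPoly x a (j+1) * (y-((j+1:ℕ):ℂ)*a)^(m+2-(j+1))
        + x * ((((m+1).choose j : ℕ):ℂ) * ((x+a)+j*a)^j * ((y-a)-j*a)^(m+1-j)) := by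
    intro j hj
    have hsub : m + 2 - (j+1) = m + 1 - j := by omega
    have hp : (((m+2).choose (j+1) : ℕ) : ℂ)
        = (((m+1).choose j : ℕ) : ℂ) + (((m+1).choose (j+1) : ℕ) : ℂ) := by
      exact_mod_cast congrArg (Nat.cast : ℕ → ℂ) (Nat.choose_succ_succ (m+1) j)
    rw [hsub, abelPoly_succ]
    push_cast at hp ⊢
    linear_combination (x * (x + ((j:ℂ)+1)*a)^j * (y - ((j:ℂ)+1)*a)^(m+1-j)) * hp
  rw [Finset.sum_congr rfl hsplit, Finset.sum_add_distrib]
  have hT : (∑ j ∈ range (m+2), (((m+1).choose (j+1) : ℕ):ℂ) * abelPoly x a (j+1) * (y-((j+1:ℕ):ℂ)*a)^(m+2-(j+1)))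
      = y * Asum a (m+1) x y
        - a * (∑ k ∈ range (m+2), (k:ℂ) * (((m+1).choose k : ℕ):ℂ) * abelPoly x a k * (y - k*a)^(m+1-k))
        - y^(m+2) := by
    have e1 := Finset.sum_range_succ' (fun k => (((m+1).choose k : ℕ):ℂ) * abelPoly x a k * (y-(k:ℂ)*a)^(m+2-k)) (m+2)
    have e2 := Finset.sum_range_succ (fun k => (((m+1).choose k : ℕ):ℂ) * abelPoly x a k * (y-(k:ℂ)*a)^(m+2-k)) (m+2)
    have e3 : ∀ k ∈ range (m+2),
        (((m+1).choose k : ℕ):ℂ) * abelPoly x a k * (y-(k:ℂ)*a)^(m+2-k)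
        = y * ((((m+1).choose k : ℕ):ℂ) * abelPoly x a k * (y-(k:ℂ)*a)^(m+1-k))
          - a * ((k:ℂ) * (((m+1).choose k : ℕ):ℂ) * abelPoly x a k * (y - k*a)^(m+1-k)) := by
      intro k hk
      have hsub : m + 2 - k = (m + 1 - k) + 1 := by
        simp at hk; omega
      rw [hsub, pow_succ]
      ring
    have h0 : (((m+1).choose (m+2) : ℕ):ℂ) * abelPoly x a (m+2) * (y-((m+2:ℕ):ℂ)*a)^(m+2-(m+2)) = 0 := by
      rw [Nat.choose_eq_zero_of_lt (by omega)]
      simp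
    calc (∑ j ∈ range (m+2), (((m+1).choose (j+1) : ℕ):ℂ) * abelPoly x a (j+1) * (y-((j+1:ℕ):ℂ)*a)^(m+2-(j+1)))
        = (∑ k ∈ range (m+3), (((m+1).choose k : ℕ):ℂ) * abelPoly x a k * (y-(k:ℂ)*a)^(m+2-k))
            - (((m+1).choose 0 : ℕ):ℂ) * abelPoly x a 0 * (y-((0:ℕ):ℂ)*a)^(m+2-0) := by
          rw [e1]; ring
      _ = (∑ k ∈ range (m+2), (((m+1).choose k : ℕ):ℂ) * abelPoly x a k * (y-(k:ℂ)*a)^(m+2-k))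
            - (((m+1).choose 0 : ℕ):ℂ) * abelPoly x a 0 * (y-((0:ℕ):ℂ)*a)^(m+2-0) := by
          rw [e2, h0]; ring
      _ = y * Asum a (m+1) x y
            - a * (∑ k ∈ range (m+2), (k:ℂ) * (((m+1).choose k : ℕ):ℂ) * abelPoly x a k * (y - k*a)^(m+1-k))
            - y^(m+2) := by
          rw [Finset.sum_congr rfl e3, Finset.sum_sub_distrib, ← Finset.mul_sum, ← Finset.mul_sum]
          unfold Asum
          simp [abelPoly]
  have hB : Bsum a (m+1) (x+a) (y-a)
      = ∑ j ∈ range (m+2), (((m+1).choose j : ℕ):ℂ) * ((x+a)+(j:ℂ)*a)^j * ((y-a)-(j:ℂ)*a)^(m+1-j) := rfl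
  rw [hT, hW, ← Finset.mul_sum, ← hB]
  simp [abelPoly]
  ring

lemma main_conj (n : ℕ) :
    (∀ a x y : ℂ, Asum a n x y = (x+y)^n) ∧
    (∀ a x y x' y' : ℂ, x + y = x' + y' → Bsum a n x y = Bsum a n x' y') := by
  induction n using Nat.strong_induction_on with
  | _ n ih =>
    match n with
    | 0 =>
      constructor
      · intro a x y; simp [Asum, abelPoly]
      · intro a x y x' y' h; simp [Bsum]
    | 1 =>
      constructor
      · intro a x y
        simp [Asum, Finset.sum_range_succ, abelPoly]
        ring
      · intro a x y x' y' h
        simp [Bsum, Finset.sum_range_succ]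
        linear_combination h
    | (m+2) =>
      have ihm := ih m (by omega)
      have ihm1 := ih (m+1) (by omega)
      have hA : ∀ a x y : ℂ, Asum a (m+2) x y = (x+y)^(m+2) := by
        intro a x y
        rw [Arec, Bdec, ihm1.1, ihm1.1,
          ihm.2 a (x+a+a) (y-a-a) (x+a) (y-a) (by ring)]
        ring
      refine ⟨hA, ?_⟩
      intro a x y x' y' h
      rw [Bdec a x y (m+1), Bdec a x' y' (m+1), hA, hA, h,
        ihm1.2 a (x+a) (y-a) (x'+a) (y'-a) (by linear_combination h)]

/-- The classical Abel identity. -/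
theorem abel_identity (x y a : ℂ) (n : ℕ) :
    (x + y) ^ n =
      ∑ k ∈ Finset.range (n + 1),
        (n.choose k : ℂ) * abelPoly x a k * (y - k * a) ^ (n - k) := by
  exact ((main_conj n).1 a x y).symm
end

section
/- Let q(x) be a polynomial of degree at most n over \mathbb{C} and let a, y, d be complex numbers. Then q(d+y) = \sum_{k=0}^n \frac{q^{(k)}(d+ka)}{k!}\, y(y-ka)^{k-1}, where for k=0 the factor y(y-ka)^{k-1} is interpreted as 1 and q^{(k)} denotes the k-th derivative. -/
open Polynomial

private lemma eq_of_deriv (p q : ℂ[X]) (h : derivative p = derivative q)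
    (h0 : p.coeff 0 = q.coeff 0) : p = q := by
  ext m
  cases m with
  | zero => exact h0
  | succ m =>
    have := congrArg (fun r => Polynomial.coeff r m) h
    simp only [Polynomial.coeff_derivative] at this
    have hm : ((m : ℂ) + 1) ≠ 0 := Nat.cast_add_one_ne_zero m
    exact mul_right_cancel₀ hm this

private lemma deriv_step (i : ℕ) (a : ℂ) :
    derivative (X * (X - C (((i:ℂ)+1+1) * a)) ^ (i+1)) =
      C ((i:ℂ)+1+1) * ((X - C a) * (X - C (((i:ℂ)+1+1) * a)) ^ i) := by
  have hc : derivative (X - C (((i:ℂ)+1+1)*a)) = 1 := by simp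
  rw [derivative_mul, derivative_X, derivative_pow_succ, hc]
  simp only [mul_one, one_mul, Nat.cast_add, Nat.cast_one, map_mul, map_add, map_one, pow_succ]
  ring

private lemma abel_poly : ∀ (n : ℕ) (q : ℂ[X]), q.natDegree ≤ n → ∀ a d : ℂ,
    (∑ k ∈ Finset.range (n+1), C ((derivative^[k] q).eval (d + k*a) / (k.factorial : ℂ)) *
      (if k = 0 then 1 else X * (X - C ((k:ℂ)*a))^(k-1))) = q.comp (C d + X) := by
  intro n
  induction n with
  | zero =>
    intro q hq a d
    have : q = C (q.coeff 0) := Polynomial.eq_C_of_natDegree_le_zero hq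
    rw [this]
    simp
  | succ n ih =>
    intro q hq a d
    apply eq_of_deriv
    · rw [map_sum, Finset.sum_range_succ']
      have h0 : derivative (C ((derivative^[0] q).eval (d + (0:ℕ)*a) / ((0:ℕ).factorial : ℂ)) *
          (if (0:ℕ) = 0 then 1 else X * (X - C (((0:ℕ):ℂ)*a))^(0-1))) = 0 := by simp
      rw [h0, add_zero]
      have hcomp : derivative (q.comp (C d + X)) = (derivative q).comp (C d + X) := by
        rw [derivative_comp]; simp
      rw [hcomp]
      have hdq : (derivative q).natDegree ≤ n := by
        have h1 := Polynomial.natDegree_derivative_le q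
        omega
      have H := congrArg (fun p : ℂ[X] => p.comp (X - C a)) (ih (derivative q) hdq a (d + a))
      simp only [sum_comp, mul_comp, C_comp, one_comp, X_comp, sub_comp, comp_assoc, add_comp,
        apply_ite (fun p : ℂ[X] => p.comp (X - C a))] at H
      simp only [pow_comp, sub_comp, X_comp, C_comp] at H
      have hshift : C (d + a) + (X - C a) = C d + X := by rw [map_add]; ring
      rw [hshift] at H
      rw [← H]
      refine Finset.sum_congr rfl ?_
      intro k _
      rw [derivative_mul, derivative_C, zero_mul, zero_add,
        if_neg (Nat.succ_ne_zero k)]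
      rcases k with _ | i
      · simp [Function.iterate_succ_apply]
      · have e1 : (i+1+1) - 1 = i + 1 := rfl
        rw [e1]
        push_cast
        rw [deriv_step i a]
        rw [← mul_assoc, ← C_mul, sub_sub, ← C_add]
        have h3 : a + ((i:ℂ)+1)*a = ((i:ℂ)+1+1)*a := by ring
        rw [h3]
        congr 1
        rw [Function.iterate_succ_apply]
        have h4 : d + ((i:ℂ)+1+1)*a = d + a + ((i:ℂ)+1)*a := by ring
        rw [h4, C_inj]
        have hf1 : (((i+1).factorial : ℕ) : ℂ) ≠ 0 := Nat.cast_ne_zero.mpr (i+1).factorial_ne_zero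
        have hf2 : (((i+1+1).factorial : ℕ) : ℂ) ≠ 0 := Nat.cast_ne_zero.mpr (i+1+1).factorial_ne_zero
        rw [Nat.factorial_succ (i+1)]
        push_cast
        have hc : ((i:ℂ)+1+1) ≠ 0 := by exact_mod_cast Nat.succ_ne_zero (i+1)
        rw [div_mul_eq_mul_div, mul_comm, mul_div_mul_left _ _ hc]
    · rw [coeff_zero_eq_eval_zero, coeff_zero_eq_eval_zero, eval_comp]
      rw [eval_finset_sum, Finset.sum_eq_single 0]
      · simp
      · intro k hk hk0
        simp [hk0]
      · intro h
        simp at h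

/-- Abel expansion of an arbitrary polynomial of degree at most `n`:
`q(d+y) = ∑_{k=0}^n q^{(k)}(d + k a)/k! ⬝ y (y - k a)^{k-1}`. -/
theorem abel_expansion (n : ℕ) (q : Polynomial ℂ) (hq : q.natDegree ≤ n) (a y d : ℂ) :
    q.eval (d + y) =
      ∑ k ∈ Finset.range (n + 1),
        ((Polynomial.derivative^[k] q).eval (d + k * a) / (k.factorial : ℂ)) *
          (if k = 0 then 1 else y * (y - k * a) ^ (k - 1)) := by
  have h := congrArg (eval y) (abel_poly n q hq a d)
  simp only [eval_finset_sum, eval_mul, eval_C, apply_ite (eval y), eval_one, eval_X,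
    eval_sub, eval_pow, eval_comp, eval_add] at h
  exact h.symm
end

section
/- For complex numbers y and a, the polynomials p_n(y) = y(y-na)^{n-1} (with p_0=1) satisfy \sum_{n\ge 0} p_n(y) z^n/n! = e^{y w(z)} as formal power series, where w(z) is the compositional inverse of the formal power series z e^{a z}. -/
open PowerSeries

/-- Composition `f ∘ g` of formal power series (the intended use is when the
constant coefficient of `g` vanishes, in which case the defining sum is the
honest composition). -/
noncomputable def psComp (f g : PowerSeries ℂ) : PowerSeries ℂ :=
  PowerSeries.mk fun n => ∑ k ∈ Finset.range (n + 1),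
    (PowerSeries.coeff k f) * (PowerSeries.coeff n (g ^ k))

/-- `e^u` for a power series `u` with zero constant coefficient. -/
noncomputable def psExp (u : PowerSeries ℂ) : PowerSeries ℂ :=
  psComp (PowerSeries.exp ℂ) u

open Finset

lemma coeff_exp' (k : ℕ) : coeff k (exp ℂ) = 1 / (k.factorial : ℂ) := by
  simp [PowerSeries.coeff_exp]

lemma coeff_psExp (u : PowerSeries ℂ) (n : ℕ) :
    coeff n (psExp u) = ∑ k ∈ range (n + 1), (1 / (k.factorial : ℂ)) * coeff n (u ^ k) := by
  simp [psExp, psComp, coeff_exp']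

lemma coeff_pow_eq_zero {u : PowerSeries ℂ} (hu : constantCoeff u = 0) {n k : ℕ} (h : n < k) :
    coeff n (u ^ k) = 0 := by
  have : X ^ k ∣ u ^ k := pow_dvd_pow_of_dvd (PowerSeries.X_dvd_iff.mpr hu) k
  exact PowerSeries.X_pow_dvd_iff.mp this n h

lemma coeff_mul_pow_eq_zero {u v : PowerSeries ℂ} (hu : constantCoeff u = 0)
    (hv : constantCoeff v = 0) {n i j : ℕ} (h : n < i + j) :
    coeff n (u ^ i * v ^ j) = 0 := by
  have : X ^ (i + j) ∣ u ^ i * v ^ j := by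
    rw [pow_add]
    exact mul_dvd_mul (pow_dvd_pow_of_dvd (PowerSeries.X_dvd_iff.mpr hu) i)
      (pow_dvd_pow_of_dvd (PowerSeries.X_dvd_iff.mpr hv) j)
  exact PowerSeries.X_pow_dvd_iff.mp this n h

lemma psExp_mul {u v : PowerSeries ℂ} (hu : constantCoeff u = 0)
    (hv : constantCoeff v = 0) : psExp u * psExp v = psExp (u + v) := by
  ext n
  set g : ℕ × ℕ → ℂ := fun p =>
    (1 / (p.1.factorial : ℂ)) * (1 / (p.2.factorial : ℂ)) * coeff n (u ^ p.1 * v ^ p.2) with hg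
  have key : ∀ (S : Finset (ℕ × ℕ)), (filter (fun p => p.1 + p.2 ≤ n) (range (n+1) ×ˢ range (n+1))) ⊆ S →
      ∑ p ∈ S, g p = ∑ p ∈ filter (fun p => p.1 + p.2 ≤ n) (range (n+1) ×ˢ range (n+1)), g p := by
    intro S hS
    refine (Finset.sum_subset hS ?_).symm
    intro p _ hp
    simp only [mem_filter, mem_product, mem_range, not_and, Nat.lt_succ_iff, not_le] at hp
    have : n < p.1 + p.2 := by
      by_cases h1 : p.1 ≤ n
      · by_cases h2 : p.2 ≤ n
        · exact hp ⟨h1, h2⟩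
        · omega
      · omega
    simp [hg, coeff_mul_pow_eq_zero hu hv this]
  -- LHS
  have lhs : coeff n (psExp u * psExp v)
      = ∑ p ∈ range (n+1) ×ˢ range (n+1), g p := by
    rw [coeff_mul]
    have step1 : ∀ pq ∈ HasAntidiagonal.antidiagonal n,
        coeff pq.1 (psExp u) * coeff pq.2 (psExp v)
        = ∑ p ∈ range (n+1) ×ˢ range (n+1),
            (1 / (p.1.factorial : ℂ)) * (1 / (p.2.factorial : ℂ)) *
              (coeff pq.1 (u ^ p.1) * coeff pq.2 (v ^ p.2)) := by
      intro pq hpq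
      rw [Finset.HasAntidiagonal.mem_antidiagonal] at hpq
      rw [coeff_psExp, coeff_psExp, Finset.sum_mul_sum]
      rw [← Finset.sum_product']
      have h1 : range (pq.1 + 1) ×ˢ range (pq.2 + 1) ⊆ range (n+1) ×ˢ range (n+1) := by
        apply Finset.product_subset_product <;> apply Finset.range_subset_range.2 <;> omega
      refine Finset.sum_subset h1 ?_ |>.trans ?_
      · intro p hp hp2
        simp only [mem_product, mem_range, Nat.lt_succ_iff, not_and, not_le] at hp hp2
        by_cases hc : p.1 ≤ pq.1
        · have : pq.2 < p.2 := hp2 hc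
          simp [coeff_pow_eq_zero hv this]
        · push_neg at hc
          simp [coeff_pow_eq_zero hu hc]
      · apply Finset.sum_congr rfl; intro p _; ring
    rw [Finset.sum_congr rfl step1, Finset.sum_comm]
    apply Finset.sum_congr rfl
    intro p _
    rw [hg, ← Finset.mul_sum]
    show _ = 1 / (p.1.factorial : ℂ) * (1 / (p.2.factorial : ℂ)) * coeff n (u ^ p.1 * v ^ p.2)
    rw [coeff_mul]
  -- RHS
  have rhs : coeff n (psExp (u + v))
      = ∑ p ∈ filter (fun p => p.1 + p.2 ≤ n) (range (n+1) ×ˢ range (n+1)), g p := by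
    rw [coeff_psExp]
    have expand : ∀ k ∈ range (n+1), (1 / (k.factorial : ℂ)) * coeff n ((u + v) ^ k)
        = ∑ ij ∈ HasAntidiagonal.antidiagonal k, g ij := by
      intro k hk
      rw [add_pow]
      rw [map_sum, Finset.mul_sum]
      rw [Finset.Nat.sum_antidiagonal_eq_sum_range_succ_mk]
      apply Finset.sum_congr rfl
      intro i hi
      rw [mem_range, Nat.lt_succ_iff] at hi
      simp only [hg]
      have hfac : ((k.choose i : ℂ)) = (k.factorial : ℂ) / ((i.factorial : ℂ) * ((k-i).factorial : ℂ)) := by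
        rw [eq_div_iff (by
          exact mul_ne_zero (Nat.cast_ne_zero.mpr i.factorial_ne_zero)
            (Nat.cast_ne_zero.mpr (k-i).factorial_ne_zero))]
        norm_cast
        rw [← Nat.choose_mul_factorial_mul_factorial hi, mul_assoc]
      have hk0 : (k.factorial : ℂ) ≠ 0 := Nat.cast_ne_zero.mpr k.factorial_ne_zero
      have hi0 : (i.factorial : ℂ) ≠ 0 := Nat.cast_ne_zero.mpr i.factorial_ne_zero
      have hki0 : (((k-i).factorial : ℂ)) ≠ 0 := Nat.cast_ne_zero.mpr (k-i).factorial_ne_zero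
      have hcast : ((k.choose i : ℕ) : PowerSeries ℂ) = PowerSeries.C ((k.choose i : ℕ) : ℂ) := by
        simp
      rw [hcast, PowerSeries.coeff_mul_C, hfac]
      field_simp
    rw [Finset.sum_congr rfl expand]
    rw [← Finset.sum_biUnion]
    · apply Finset.sum_congr _ (fun _ _ => rfl)
      ext p
      simp only [Finset.mem_biUnion, mem_range, Finset.HasAntidiagonal.mem_antidiagonal, mem_filter, mem_product,
        Nat.lt_succ_iff]
      constructor
      · rintro ⟨k, hk, rfl⟩; omega
      · intro h; exact ⟨p.1 + p.2, by omega, rfl⟩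
    · intro s hs t ht hst
      apply Finset.disjoint_left.mpr
      intro p hp hp2
      rw [Finset.HasAntidiagonal.mem_antidiagonal] at hp hp2
      exact hst (by omega)
  rw [lhs, rhs]
  exact key _ (Finset.filter_subset _ _)

lemma psExp_zero : psExp (0 : PowerSeries ℂ) = 1 := by
  ext n
  rw [coeff_psExp]
  rcases n with _ | m
  · simp
  · rw [PowerSeries.coeff_one, if_neg (Nat.succ_ne_zero m)]
    apply Finset.sum_eq_zero
    intro k hk
    rcases Nat.eq_zero_or_pos k with rfl | hkpos
    · simp [PowerSeries.coeff_one]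
    · rw [zero_pow (by omega)]
      simp

lemma constantCoeff_smul (c : ℂ) (u : PowerSeries ℂ) (h : constantCoeff u = 0) :
    constantCoeff (c • u) = 0 := by
  rw [← PowerSeries.coeff_zero_eq_constantCoeff] at h ⊢
  rw [PowerSeries.coeff_smul, h, smul_zero]

section main
variable (a : ℂ) (w : PowerSeries ℂ)

lemma w_eq (hw0 : constantCoeff w = 0) (hw : w * psExp (a • w) = PowerSeries.X) :
    w = PowerSeries.X * psExp ((-a) • w) := by
  have h1 : psExp (a • w) * psExp ((-a) • w) = 1 := by
    rw [psExp_mul (constantCoeff_smul _ _ hw0) (constantCoeff_smul _ _ hw0)]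
    rw [neg_smul, add_neg_cancel, psExp_zero]
  calc w = w * (psExp (a • w) * psExp ((-a) • w)) := by rw [h1, mul_one]
    _ = (w * psExp (a • w)) * psExp ((-a) • w) := by ring
    _ = PowerSeries.X * psExp ((-a) • w) := by rw [hw]

lemma w_pow (hw0 : constantCoeff w = 0) (hw : w * psExp (a • w) = PowerSeries.X) (k : ℕ) :
    w ^ k = PowerSeries.X ^ k * psExp ((-(k : ℂ) * a) • w) := by
  induction k with
  | zero => simp [psExp_zero]
  | succ k ih =>
    have he := w_eq a w hw0 hw
    calc w ^ (k+1) = (PowerSeries.X ^ k * psExp ((-(k:ℂ) * a) • w)) * w := by rw [pow_succ, ih]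
      _ = (PowerSeries.X ^ k * psExp ((-(k:ℂ) * a) • w)) * (PowerSeries.X * psExp ((-a) • w)) := by
          rw [← he]
      _ = PowerSeries.X ^ (k+1) * (psExp ((-(k:ℂ) * a) • w) * psExp ((-a) • w)) := by ring
      _ = PowerSeries.X ^ (k+1) * psExp ((-((k+1 : ℕ) : ℂ) * a) • w) := by
          rw [psExp_mul (constantCoeff_smul _ _ hw0) (constantCoeff_smul _ _ hw0), ← add_smul]
          congr 2
          push_cast; ring
end main

lemma abel_sum (y a : ℂ) (m : ℕ) :
    ∑ k ∈ Finset.range (m+2), (if k = 0 then (0:ℂ) else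
      y^k / (k.factorial : ℂ) *
        ((if k = m+1 then 1 else (-(k:ℂ)*a) * (-((m+1 : ℕ) : ℂ)*a)^(m-k)) / (((m+1-k).factorial : ℂ))))
    = y * (y - ((m+1 : ℕ) : ℂ)*a)^m / (((m+1).factorial : ℂ)) := by
  have hrhs : y * (y - ((m+1 : ℕ) : ℂ)*a)^m
      = ∑ j ∈ Finset.range (m+1), y^(j+1) * (-((m+1 : ℕ) : ℂ)*a)^(m-j) * (m.choose j : ℂ) := by
    have : y - ((m+1 : ℕ) : ℂ)*a = y + (-((m+1 : ℕ) : ℂ)*a) := by ring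
    rw [this, add_pow, Finset.mul_sum]
    apply Finset.sum_congr rfl
    intro j _
    ring
  rw [hrhs, Finset.sum_div, Finset.sum_range_succ']
  rw [if_pos rfl, add_zero]
  apply Finset.sum_congr rfl
  intro j hj
  rw [Finset.mem_range] at hj
  rw [if_neg (Nat.succ_ne_zero j)]
  rcases Nat.lt_or_ge j m with hjm | hjm
  · -- j < m, so j+1 ≠ m+1
    rw [if_neg (by omega)]
    have h1 : m - (j+1) = m - j - 1 := by omega
    have h2 : (-((m+1 : ℕ) : ℂ)*a)^(m-j) = (-((m+1 : ℕ) : ℂ)*a)^(m-j-1) * (-((m+1 : ℕ) : ℂ)*a) := by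
      rw [← pow_succ]
      congr 1
      omega
    have e3 : m + 1 - (j + 1) = m - j := by omega
    rw [h1, h2, e3]
    have hfac : (m.choose j : ℂ) * ((j.factorial : ℂ)) * (((m-j).factorial : ℂ)) = (m.factorial : ℂ) := by
      exact_mod_cast congrArg (Nat.cast : ℕ → ℂ) (Nat.choose_mul_factorial_mul_factorial hjm.le)
    have hkeyNat : (m+1).factorial * (j+1)
        = m.choose j * (m+1) * (j+1).factorial * (m-j).factorial := by
      have h := Nat.choose_mul_factorial_mul_factorial hjm.le
      calc (m+1).factorial * (j+1) = (j+1) * ((m+1) * m.factorial) := by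
            rw [Nat.factorial_succ]; ring
        _ = (j+1) * ((m+1) * (m.choose j * j.factorial * (m-j).factorial)) := by rw [h]
        _ = m.choose j * (m+1) * ((j+1) * j.factorial) * (m-j).factorial := by ring
        _ = m.choose j * (m+1) * (j+1).factorial * (m-j).factorial := by
            rw [← Nat.factorial_succ]
    have hkey : (((m+1).factorial : ℂ)) * ((j:ℂ)+1)
        = (m.choose j : ℂ) * ((m:ℂ)+1) * (((j+1).factorial : ℂ)) * (((m-j).factorial : ℂ)) := by
      exact_mod_cast congrArg (Nat.cast : ℕ → ℂ) hkeyNat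
    have h10 : (((j+1).factorial : ℂ)) ≠ 0 := Nat.cast_ne_zero.mpr (j+1).factorial_ne_zero
    have h11 : (((m-j).factorial : ℂ)) ≠ 0 := Nat.cast_ne_zero.mpr (m-j).factorial_ne_zero
    have h12 : (((m+1).factorial : ℂ)) ≠ 0 := Nat.cast_ne_zero.mpr (m+1).factorial_ne_zero
    generalize (-((m+1 : ℕ) : ℂ)*a)^(m-j-1) = P
    field_simp
    push_cast
    linear_combination (-(y^(j+1) * a * P)) * hkey
  · -- j = m
    have : j = m := by omega
    subst this
    rw [if_pos rfl]
    simp [Nat.factorial_succ]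

lemma coeff_X_pow_mul' (p : PowerSeries ℂ) {n k : ℕ} (h : k ≤ n) :
    coeff n (PowerSeries.X ^ k * p) = coeff (n - k) p := by
  conv_lhs => rw [show n = (n - k) + k from by omega]
  exact PowerSeries.coeff_X_pow_mul p k (n - k)

lemma main_coeff (a : ℂ) (w : PowerSeries ℂ)
    (hw0 : constantCoeff w = 0) (hw : w * psExp (a • w) = PowerSeries.X) :
    ∀ n : ℕ, ∀ y : ℂ, coeff n (psExp (y • w)) =
      (if n = 0 then 1 else y * ((y - (n : ℂ) * a) ^ (n - 1))) / (n.factorial : ℂ) := by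
  intro n
  induction n using Nat.strong_induction_on with
  | _ n IH =>
    intro y
    rcases Nat.eq_zero_or_pos n with rfl | hpos
    · simp [coeff_psExp]
    obtain ⟨m, rfl⟩ : ∃ m, n = m + 1 := ⟨n - 1, by omega⟩
    rw [coeff_psExp]
    have hterm : ∀ k ∈ Finset.range (m+1+1),
        (1 / (k.factorial : ℂ)) * coeff (m+1) ((y • w) ^ k)
        = (if k = 0 then (0:ℂ) else
            y^k / (k.factorial : ℂ) *
              ((if k = m+1 then 1 else (-(k:ℂ)*a) * (-((m+1 : ℕ) : ℂ)*a)^(m-k)) /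
                (((m+1-k).factorial : ℂ)))) := by
      intro k hk
      rw [Finset.mem_range] at hk
      rcases Nat.eq_zero_or_pos k with rfl | hkpos
      · simp [PowerSeries.coeff_one]
      rw [if_neg (by omega)]
      rw [smul_pow, PowerSeries.coeff_smul, smul_eq_mul]
      rw [w_pow a w hw0 hw k]
      rw [coeff_X_pow_mul' _ (show k ≤ m+1 by omega)]
      rw [IH (m+1-k) (by omega) (-(k:ℂ)*a)]
      by_cases hkm : k = m+1
      · subst hkm
        simp [Nat.sub_self]
        ring
      · rw [if_neg (by omega : ¬ (m+1-k = 0)), if_neg hkm]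
        have hbase : (-(k:ℂ)*a) - ((m+1-k : ℕ) : ℂ) * a = -((m+1 : ℕ) : ℂ)*a := by
          push_cast [Nat.cast_sub (show k ≤ m+1 by omega)]
          ring
        have hexp : m+1-k-1 = m-k := by omega
        rw [hbase, hexp]
        ring
    rw [Finset.sum_congr rfl hterm]
    rw [show m+1+1 = m+2 from rfl]
    rw [abel_sum y a m]
    rw [if_neg (Nat.succ_ne_zero m), Nat.add_sub_cancel]


/-- Lagrange inversion for `z e^{a z}`:  if `w` is the compositional inverse of
`z e^{a z}` then `∑_{n≥0} y (y - n a)^{n-1} zⁿ/n! = e^{y w(z)}`. -/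
theorem abel_egf (y a : ℂ) (w : PowerSeries ℂ)
    (hw0 : PowerSeries.constantCoeff w = 0)
    (hw : w * psExp (a • w) = PowerSeries.X) :
    (PowerSeries.mk fun n =>
        (if n = 0 then 1 else y * (y - n * a) ^ (n - 1)) / (n.factorial : ℂ)) =
      psExp (y • w) := by
  ext n
  rw [PowerSeries.coeff_mk]
  exact (main_coeff a w hw0 hw n y).symm
end

section
/- Let f(z) and g(z) be formal power series over \mathbb{C} with g(0)=1, and let w(z) be the compositional inverse of z g(z). Then for all n\ge 1, the coefficient of z^n in f(w(z)) equals (1/n) times the coefficient of z^{n-1} in f'(z)\,g(z)^{-n}. -/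
open PowerSeries

open Finset

section Aux

lemma coeff_w_pow_eq_zero {w : PowerSeries ℂ} (hw0 : constantCoeff w = 0)
    {k n : ℕ} (h : n < k) : coeff n (w ^ k) = 0 :=
  X_pow_dvd_iff.mp (pow_dvd_pow_of_dvd (X_dvd_iff.mpr hw0) k) n h

lemma coeff_psComp (f w : PowerSeries ℂ) (n : ℕ) :
    coeff n (psComp f w) = ∑ k ∈ range (n + 1), coeff k f * coeff n (w ^ k) := by
  simp [psComp]

lemma coeff_psComp' {w : PowerSeries ℂ} (hw0 : constantCoeff w = 0)
    (f : PowerSeries ℂ) {n N : ℕ} (hN : n < N) :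
    coeff n (psComp f w) = ∑ k ∈ range N, coeff k f * coeff n (w ^ k) := by
  rw [coeff_psComp]
  apply Finset.sum_subset (Finset.range_subset_range.mpr hN)
  intro k hk hk2
  rw [coeff_w_pow_eq_zero hw0 (by simp at hk2; omega), mul_zero]

lemma constantCoeff_psComp (f w : PowerSeries ℂ) :
    constantCoeff (psComp f w) = constantCoeff f := by
  have := coeff_psComp f w 0
  simpa using this

lemma psComp_mul (f h w : PowerSeries ℂ) (hw0 : constantCoeff w = 0) :
    psComp (f * h) w = psComp f w * psComp h w := by
  ext n
  rw [coeff_psComp, PowerSeries.coeff_mul]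
  have hR : ∑ p ∈ Finset.HasAntidiagonal.antidiagonal n, coeff p.1 (psComp f w) * coeff p.2 (psComp h w)
      = ∑ i ∈ range (n+1), ∑ j ∈ range (n+1),
          coeff i f * coeff j h * coeff n (w ^ (i + j)) := by
    have h1 : ∀ p ∈ Finset.HasAntidiagonal.antidiagonal n,
        coeff p.1 (psComp f w) * coeff p.2 (psComp h w)
        = ∑ i ∈ range (n+1), ∑ j ∈ range (n+1),
            coeff i f * coeff j h * (coeff p.1 (w ^ i) * coeff p.2 (w ^ j)) := by
      intro p hp
      rw [Finset.HasAntidiagonal.mem_antidiagonal] at hp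
      rw [coeff_psComp' hw0 f (show p.1 < n+1 by omega),
          coeff_psComp' hw0 h (show p.2 < n+1 by omega), Finset.sum_mul_sum]
      apply Finset.sum_congr rfl; intro i _
      apply Finset.sum_congr rfl; intro j _
      ring
    rw [Finset.sum_congr rfl h1, Finset.sum_comm]
    apply Finset.sum_congr rfl; intro i _
    rw [Finset.sum_comm]
    apply Finset.sum_congr rfl; intro j _
    rw [← Finset.mul_sum, pow_add, PowerSeries.coeff_mul]
  rw [hR]
  have h2 : ∀ k ∈ range (n+1), coeff k (f * h) * coeff n (w ^ k)
      = ∑ p ∈ Finset.HasAntidiagonal.antidiagonal k, coeff p.1 f * coeff p.2 h * coeff n (w ^ (p.1 + p.2)) := by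
    intro k _
    rw [PowerSeries.coeff_mul, Finset.sum_mul]
    apply Finset.sum_congr rfl; intro p hp
    rw [Finset.HasAntidiagonal.mem_antidiagonal] at hp
    rw [hp]
  rw [Finset.sum_congr rfl h2, ← Finset.sum_biUnion]
  · rw [← Finset.sum_product']
    apply Finset.sum_subset
    · intro p hp
      rw [Finset.mem_biUnion] at hp
      obtain ⟨k, hk, hpk⟩ := hp
      rw [Finset.HasAntidiagonal.mem_antidiagonal] at hpk
      simp only [Finset.mem_product, Finset.mem_range] at *
      omega
    · intro p hp hnp
      have : n < p.1 + p.2 := by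
        by_contra hc
        exact hnp (Finset.mem_biUnion.mpr ⟨p.1 + p.2, Finset.mem_range.mpr (by omega),
          Finset.HasAntidiagonal.mem_antidiagonal.mpr rfl⟩)
      rw [coeff_w_pow_eq_zero hw0 this, mul_zero]
  · intro a _ b _ hab
    simp only [Finset.disjoint_left]
    intro p hpa hpb
    rw [Finset.HasAntidiagonal.mem_antidiagonal] at hpa hpb
    exact hab (hpa ▸ hpb ▸ rfl)

lemma psComp_one (w : PowerSeries ℂ) : psComp 1 w = 1 := by
  ext n
  rw [coeff_psComp]
  rw [Finset.sum_eq_single 0]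
  · simp
  · intro k _ hk
    rw [PowerSeries.coeff_one, if_neg hk, zero_mul]
  · simp

lemma psComp_X {w : PowerSeries ℂ} (hw0 : constantCoeff w = 0) : psComp X w = w := by
  ext n
  rw [coeff_psComp]
  rw [Finset.sum_eq_single 1]
  · simp
  · intro k _ hk
    rw [PowerSeries.coeff_X, if_neg hk, zero_mul]
  · intro hn
    have : n = 0 := by simp at hn; omega
    subst this
    simp [hw0]

lemma psComp_pow (u w : PowerSeries ℂ) (hw0 : constantCoeff w = 0) (k : ℕ) :
    psComp (u ^ k) w = (psComp u w) ^ k := by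
  induction k with
  | zero => simpa using psComp_one w
  | succ k ih => rw [pow_succ, pow_succ, psComp_mul _ _ _ hw0, ih]

lemma psComp_X_right (f : PowerSeries ℂ) : psComp f X = f := by
  ext n
  rw [coeff_psComp]
  rw [Finset.sum_eq_single n]
  · rw [← pow_one (X : PowerSeries ℂ), ← pow_mul, one_mul, PowerSeries.coeff_X_pow, if_pos rfl, mul_one]
  · intro k _ hk
    rw [← pow_one (X : PowerSeries ℂ), ← pow_mul, one_mul, PowerSeries.coeff_X_pow,
      if_neg (by omega), mul_zero]
  · simp

lemma psComp_assoc (f u v : PowerSeries ℂ) (hu0 : constantCoeff u = 0)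
    (hv0 : constantCoeff v = 0) :
    psComp (psComp f u) v = psComp f (psComp u v) := by
  ext n
  rw [coeff_psComp]
  have h1 : ∀ k ∈ range (n+1), coeff k (psComp f u) * coeff n (v ^ k)
      = ∑ j ∈ range (n+1), coeff j f * (coeff k (u ^ j) * coeff n (v ^ k)) := by
    intro k hk
    rw [coeff_psComp' hu0 f (show k < n+1 from Finset.mem_range.mp hk), Finset.sum_mul]
    apply Finset.sum_congr rfl; intro j _; ring
  rw [Finset.sum_congr rfl h1, Finset.sum_comm]
  rw [coeff_psComp]
  apply Finset.sum_congr rfl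
  intro j hj
  rw [← Finset.mul_sum]
  congr 1
  rw [← psComp_pow u v hv0, coeff_psComp]

lemma psComp_eq_X {φ ψ : PowerSeries ℂ} (hφ0 : constantCoeff φ = 0)
    (hφ1 : coeff 1 φ = 1) (hψ0 : constantCoeff ψ = 0)
    (h : psComp φ ψ = φ) : ψ = X := by
  ext n
  induction n using Nat.strong_induction_on with
  | _ n IH =>
  rcases Nat.eq_zero_or_pos n with rfl | hn
  · simp [hψ0]
  have hd : (X : PowerSeries ℂ) ^ n ∣ (ψ - X) :=
    X_pow_dvd_iff.mpr fun m hm => by rw [map_sub, IH m hm, sub_self]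
  have hpow : ∀ k, 2 ≤ k → coeff n (ψ ^ k) = coeff n ((X : PowerSeries ℂ) ^ k) := by
    intro k hk
    have hS : constantCoeff (∑ i ∈ range k, ψ ^ i * (X : PowerSeries ℂ) ^ (k - 1 - i)) = 0 := by
      rw [map_sum]
      apply Finset.sum_eq_zero
      intro i hi
      rcases Nat.eq_zero_or_pos i with rfl | hi1
      · rw [pow_zero, one_mul, map_pow, constantCoeff_X, zero_pow (by omega)]
      · rw [map_mul, map_pow, hψ0, zero_pow (by omega), zero_mul]
    have hdvd : (X : PowerSeries ℂ) ^ (n + 1) ∣ ψ ^ k - (X : PowerSeries ℂ) ^ k := by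
      rw [← geom_sum₂_mul, pow_succ']
      exact mul_dvd_mul (X_dvd_iff.mpr hS) hd
    have := X_pow_dvd_iff.mp hdvd n (by omega)
    rw [map_sub, sub_eq_zero] at this
    exact this
  have hsum : ∑ k ∈ range (n+1), coeff k φ * coeff n (ψ ^ k)
      = ∑ k ∈ range (n+1), coeff k φ * coeff n ((X : PowerSeries ℂ) ^ k) := by
    rw [← coeff_psComp, ← coeff_psComp, h, psComp_X_right]
  have h1mem : 1 ∈ range (n+1) := Finset.mem_range.mpr (by omega)
  rw [← Finset.add_sum_erase _ _ h1mem, ← Finset.add_sum_erase _ _ h1mem] at hsum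
  have heq : ∑ k ∈ (range (n+1)).erase 1, coeff k φ * coeff n (ψ ^ k)
      = ∑ k ∈ (range (n+1)).erase 1, coeff k φ * coeff n ((X : PowerSeries ℂ) ^ k) := by
    apply Finset.sum_congr rfl
    intro k hk
    rcases Nat.eq_zero_or_pos k with rfl | hk1
    · simp
    · have : 2 ≤ k := by
        have := Finset.ne_of_mem_erase hk; omega
      rw [hpow k this]
  rw [heq] at hsum
  have := add_right_cancel hsum
  rw [hφ1, one_mul, one_mul, pow_one, pow_one] at this
  exact this

lemma left_inv {g w : PowerSeries ℂ} (hg : constantCoeff g = 1)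
    (hw0 : constantCoeff w = 0) (hw : psComp (X * g) w = X) :
    psComp w (X * g) = X := by
  set φ := (X : PowerSeries ℂ) * g with hφ
  have hφ0 : constantCoeff φ = 0 := by simp [hφ]
  have hφ1 : coeff 1 φ = 1 := by
    rw [hφ, coeff_succ_X_mul, coeff_zero_eq_constantCoeff, hg]
  have hψ0 : constantCoeff (psComp w φ) = 0 := by rw [constantCoeff_psComp, hw0]
  apply psComp_eq_X hφ0 hφ1 hψ0
  rw [← psComp_assoc φ w φ hw0 hφ0, hw, psComp_X hφ0]

lemma derivativeFun_pow' (p : PowerSeries ℂ) (l : ℕ) :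
    derivativeFun (p ^ (l+1)) = ((l:ℂ⟦X⟧)+1) * p ^ l * derivativeFun p := by
  induction l with
  | zero => simp
  | succ l ih =>
    rw [pow_succ, derivativeFun_mul, ih, pow_succ]
    simp only [smul_eq_mul]
    push_cast
    ring

lemma coeff_X_pow_mul'_s5 (q : ℂ⟦X⟧) {a b : ℕ} (h : b ≤ a) :
    coeff a ((X:ℂ⟦X⟧)^b * q) = coeff (a - b) q := by
  obtain ⟨c, rfl⟩ : ∃ c, a = c + b := ⟨a - b, by omega⟩
  have hc : c + b - b = c := by omega
  rw [hc, PowerSeries.coeff_X_pow_mul]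

lemma coeff_X_pow_mul_zero (q : ℂ⟦X⟧) {a b : ℕ} (h : a < b) :
    coeff a ((X:ℂ⟦X⟧)^b * q) = 0 :=
  X_pow_dvd_iff.mp (dvd_mul_right _ _) a h

lemma key_coeff {g : ℂ⟦X⟧} (hg : constantCoeff g = 1) {n m : ℕ} (hn : 1 ≤ n) (hm : 1 ≤ m) :
    coeff (n-1) (derivativeFun ((X*g)^m) * (g⁻¹)^n) = if m = n then (n:ℂ) else 0 := by
  set u := g⁻¹ with hu
  have hg0 : constantCoeff g ≠ 0 := by rw [hg]; exact one_ne_zero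
  have hgu : g * u = 1 := PowerSeries.mul_inv_cancel g hg0
  obtain ⟨l, rfl⟩ : ∃ l, m = l + 1 := ⟨m-1, by omega⟩
  have hφ' : derivativeFun ((X : ℂ⟦X⟧)*g) = g + X * derivativeFun g := by
    rw [derivativeFun_mul, show derivativeFun (X:ℂ⟦X⟧) = 1 from PowerSeries.derivative_X]
    simp only [smul_eq_mul]
    ring
  have main : derivativeFun ((X*g)^(l+1)) * u^n
      = (C ((l:ℂ)+1)) * ((X:ℂ⟦X⟧)^l * (g^(l+1) * u^n))
        + (C ((l:ℂ)+1)) * ((X:ℂ⟦X⟧)^(l+1) * (g^l * derivativeFun g * u^n)) := by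
    rw [derivativeFun_pow', hφ', mul_pow]
    have : ((l:ℂ⟦X⟧)+1) = C ((l:ℂ)+1) := by
      rw [map_add, map_one, map_natCast]
    rw [this]
    ring
  rcases lt_trichotomy (l+1) n with hlt | heq | hgt
  · rw [if_neg (by omega), main, map_add, coeff_C_mul, coeff_C_mul,
      coeff_X_pow_mul'_s5 _ (by omega : l ≤ n - 1),
      coeff_X_pow_mul'_s5 _ (by omega : l + 1 ≤ n - 1)]
    obtain ⟨e, he⟩ : ∃ e, n = l + e + 2 := ⟨n - l - 2, by omega⟩
    subst he
    have hidx1 : l + e + 2 - 1 - l = e + 1 := by omega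
    have hidx2 : l + e + 2 - 1 - (l + 1) = e := by omega
    rw [hidx1, hidx2]
    obtain ⟨t, ht⟩ : ∃ t, l + e + 2 = t + 1 := ⟨l + e + 1, by omega⟩
    have hdu : derivativeFun u = -(u^2) * derivativeFun g := PowerSeries.derivative_inv' g
    have hgn1 : g^(l+1) * u^(l+e+2+1) = g^l * u^(l+e+2) * (g * u) := by ring
    have hdh : derivativeFun (g^(l+1) * u^(l+e+2))
        = C (-((e:ℂ)+1)) * (g^l * derivativeFun g * u^(l+e+2)) := by
      rw [derivativeFun_mul]
      simp only [smul_eq_mul]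
      rw [ht, derivativeFun_pow' u t, derivativeFun_pow' g l, hdu, ← ht]
      have hc : (t:ℂ⟦X⟧)+1 = C ((t:ℂ)+1) := by rw [map_add, map_one, map_natCast]
      have hc2 : (l:ℂ⟦X⟧)+1 = C ((l:ℂ)+1) := by rw [map_add, map_one, map_natCast]
      have expand : g ^ (l + 1) * (C ((t:ℂ)+1) * u ^ t * (-(u^2) * derivativeFun g))
          = -(C ((t:ℂ)+1)) * (g^l * u^(l+e+2) * (g*u) * derivativeFun g) := by
        rw [← hgn1]
        have : l + e + 2 + 1 = t + 2 := by omega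
        rw [this]
        ring
      rw [hc, hc2, expand, hgu]
      have hct : ((t:ℂ)+1) = ((l:ℂ)+1) + ((e:ℂ)+1) := by
        have : t = l + e + 1 := by omega
        rw [this]; push_cast; ring
      rw [hct]
      simp only [map_add, map_neg]
      ring
    have hco := congrArg (coeff e) hdh
    rw [show ∀ (F : ℂ⟦X⟧) (m : ℕ), coeff m (derivativeFun F) = coeff (m+1) F * (m+1) from fun F m => coeff_derivative F m, coeff_C_mul] at hco
    have : coeff (e+1) (g^(l+1) * u^(l+e+2))
        = -(coeff e (g^l * derivativeFun g * u^(l+e+2))) := by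
      have hne : ((e:ℂ)+1) ≠ 0 := Nat.cast_add_one_ne_zero e
      apply mul_right_cancel₀ hne
      linear_combination hco
    rw [this]
    ring
  · subst heq
    rw [if_pos rfl, main, map_add, coeff_C_mul, coeff_C_mul]
    have h1 : g^(l+1) * u^(l+1) = 1 := by rw [← mul_pow, hgu, one_pow]
    rw [h1, coeff_X_pow_mul'_s5 _ (by omega : l ≤ l + 1 - 1)]
    have : l + 1 - 1 - l = 0 := by omega
    rw [this, coeff_X_pow_mul_zero _ (by omega : l + 1 - 1 < l + 1)]
    simp
  · rw [if_neg (by omega), main, map_add, coeff_C_mul, coeff_C_mul,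
      coeff_X_pow_mul_zero _ (by omega : n - 1 < l),
      coeff_X_pow_mul_zero _ (by omega : n - 1 < l + 1)]
    ring

end Aux

/-- The Lagrange inversion formula:
`[zⁿ] f(w(z)) = (1/n) [z^{n-1}] f'(z) (1/g(z))ⁿ`, where `w` is the compositional
inverse of `z g(z)` and `g(0) = 1`. -/
theorem lagrange_inversion (f g : PowerSeries ℂ)
    (hg : PowerSeries.constantCoeff g = 1)
    (w : PowerSeries ℂ) (hw0 : PowerSeries.constantCoeff w = 0)
    (hw : psComp (PowerSeries.X * g) w = PowerSeries.X)
    (n : ℕ) (hn : 1 ≤ n) :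
    PowerSeries.coeff n (psComp f w) =
      (1 / (n : ℂ)) *
        PowerSeries.coeff (n - 1) (PowerSeries.derivativeFun f * (g⁻¹) ^ n) := by
  have hφ0 : constantCoeff ((X : ℂ⟦X⟧) * g) = 0 := by simp
  have hwφ : psComp w (X * g) = X := left_inv hg hw0 hw
  have hfA : psComp (psComp f w) (X * g) = f := by
    rw [psComp_assoc f w (X * g) hw0 hφ0, hwφ, psComp_X_right]
  obtain ⟨p, rfl⟩ : ∃ p, n = p + 1 := ⟨n-1, by omega⟩
  set A := psComp f w with hA
  have main : coeff p (derivativeFun f * (g⁻¹)^(p+1))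
      = coeff (p+1) A * ((p+1 : ℕ) : ℂ) := by
    conv_lhs => rw [← hfA]
    have step1 : coeff p (derivativeFun (psComp A (X*g)) * (g⁻¹)^(p+1))
        = ∑ k ∈ range (p+2), coeff k A *
            coeff p (derivativeFun ((X*g)^k) * (g⁻¹)^(p+1)) := by
      rw [PowerSeries.coeff_mul]
      have h1 : ∀ q ∈ Finset.HasAntidiagonal.antidiagonal p,
          coeff q.1 (derivativeFun (psComp A (X*g))) * coeff q.2 ((g⁻¹)^(p+1))
          = ∑ k ∈ range (p+2), coeff k A *
              (coeff q.1 (derivativeFun ((X*g)^k)) * coeff q.2 ((g⁻¹)^(p+1))) := by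
        intro q hq
        rw [Finset.HasAntidiagonal.mem_antidiagonal] at hq
        rw [show ∀ (F : ℂ⟦X⟧) (m : ℕ), coeff m (derivativeFun F) = coeff (m+1) F * (m+1) from fun F m => coeff_derivative F m, coeff_psComp' hφ0 A (show q.1+1 < p+2 by omega),
          Finset.sum_mul, Finset.sum_mul]
        apply Finset.sum_congr rfl; intro k _
        rw [show ∀ (F : ℂ⟦X⟧) (m : ℕ), coeff m (derivativeFun F) = coeff (m+1) F * (m+1) from fun F m => coeff_derivative F m]
        ring
      rw [Finset.sum_congr rfl h1, Finset.sum_comm]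
      apply Finset.sum_congr rfl; intro k _
      rw [← Finset.mul_sum, PowerSeries.coeff_mul]
    rw [step1, Finset.sum_eq_single (p+1)]
    · have := key_coeff hg (n := p+1) (m := p+1) (by omega) (by omega)
      rw [show p+1-1 = p from rfl] at this
      rw [this, if_pos rfl]
    · intro k hk hkne
      rcases Nat.eq_zero_or_pos k with rfl | hk1
      · rw [pow_zero, derivativeFun_one, zero_mul, map_zero, mul_zero]
      · have := key_coeff hg (n := p+1) (m := k) (by omega) hk1
        rw [show p+1-1 = p from rfl] at this
        rw [this, if_neg hkne, mul_zero]
    · intro hmem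
      exact absurd (Finset.mem_range.mpr (by omega)) hmem
  rw [show p+1-1 = p from rfl, main]
  have hne : ((p:ℂ) + 1) ≠ 0 := Nat.cast_add_one_ne_zero p
  field_simp
end
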